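/- (Correctness / non-increasing order property of SGRAND.) Suppose n ≥ 1, assume the reliability hypotheses (H1) and (H2), and let (S, e) be an SGRAND run. For every g such that S g and S (g+1) are both nonempty, Q(e (g+1)) ≤ Q(e g); that is, error vectors are queried in non-increasing order of likelihood. -/

import Mathlib

/-- The index of the least reliable flipped bit: the largest coordinate `j`
with `e j ≠ 0` (as a natural number; `0` if `e = 0`). -/
def jstar {n : ℕ} (e : Fin n → ZMod 2) : ℕ :=
  (Finset.univ.filter fun j => e j ≠ 0).sup fun j => (j : ℕ)

/-- The parent `π(e)` of an error vector: zero out coordinate `j*(e)` and,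
if `j*(e) > 0`, set coordinate `j*(e) - 1` to `1`; `π(0) = 0`. -/
def parent {n : ℕ} (e : Fin n → ZMod 2) : Fin n → ZMod 2 :=
  if e = 0 then 0
  else fun j =>
    if (j : ℕ) = jstar e then 0
    else if 0 < jstar e ∧ (j : ℕ) = jstar e - 1 then 1
    else e j
/-- `deltaN k` is the vector with a `1` at the coordinate of index `k` and `0` elsewhere. -/
def deltaN {n : ℕ} (k : ℕ) : Fin n → ZMod 2 := fun i => if (i : ℕ) = k then 1 else 0

/-- The children set `C(e)`. -/
def children {n : ℕ} (e : Fin n → ZMod 2) : Finset (Fin n → ZMod 2) :=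
  if e = 0 then {deltaN 0}
  else if jstar e = n - 1 then ∅
  else {e + deltaN (jstar e + 1), e + deltaN (jstar e) + deltaN (jstar e + 1)}
/-- Likelihood of an error vector given per-bit likelihoods `q`. -/
noncomputable def Q {n : ℕ} (q : Fin n → ZMod 2 → NNReal) (e : Fin n → ZMod 2) : NNReal :=
  ∏ j, q j (e j)
/-- An SGRAND run: `S g` is the candidate set before the `(g+1)`-st query and
`E g` is the `(g+1)`-st queried error vector. -/
def SGRANDRun {n : ℕ} (q : Fin n → ZMod 2 → NNReal)
    (S : ℕ → Finset (Fin n → ZMod 2)) (E : ℕ → Fin n → ZMod 2) : Prop :=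
  S 0 = {0} ∧
  ∀ g, (S g).Nonempty →
    E g ∈ S g ∧ (∀ v ∈ S g, Q q v ≤ Q q (E g)) ∧
    S (g + 1) = (S g).erase (E g) ∪ children (E g)

lemma zmod2_cases : ∀ x : ZMod 2, x = 0 ∨ x = 1 := by decide

lemma jstar_mem {n : ℕ} {e : Fin n → ZMod 2} (he : e ≠ 0) :
    ∃ j : Fin n, (j : ℕ) = jstar e ∧ e j = 1 := by
  have hne : (Finset.univ.filter fun j => e j ≠ 0).Nonempty := by
    obtain ⟨j, hj⟩ := Function.ne_iff.mp he
    exact ⟨j, by simp; simpa using hj⟩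
  obtain ⟨j, hj, hsup⟩ := Finset.exists_mem_eq_sup _ hne (fun j : Fin n => (j : ℕ))
  refine ⟨j, hsup.symm, ?_⟩
  have := (Finset.mem_filter.mp hj).2
  rcases zmod2_cases (e j) with h | h
  · exact absurd h this
  · exact h

lemma eq_zero_of_gt_jstar {n : ℕ} {e : Fin n → ZMod 2} {j : Fin n}
    (h : jstar e < (j : ℕ)) : e j = 0 := by
  by_contra hne
  have : (j : ℕ) ≤ jstar e :=
    Finset.le_sup (f := fun j : Fin n => (j : ℕ)) (Finset.mem_filter.mpr ⟨Finset.mem_univ _, hne⟩)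
  omega

lemma child_le {n : ℕ} (q : Fin n → ZMod 2 → NNReal)
    (H1 : ∀ j, q j 1 ≤ q j 0)
    (H2 : ∀ j l : Fin n, j < l → q j 0 * q l 1 ≤ q j 1 * q l 0)
    (e : Fin n → ZMod 2) : ∀ c ∈ children e, Q q c ≤ Q q e := by
  intro c hc
  unfold children at hc
  split_ifs at hc with h0 hj
  · -- e = 0, c = deltaN 0
    simp only [Finset.mem_singleton] at hc
    subst hc h0
    refine Finset.prod_le_prod' fun j _ => ?_
    simp only [deltaN, Pi.zero_apply]
    split_ifs
    · exact H1 j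
    · exact le_refl _
  · exact absurd hc (Finset.notMem_empty c)
  · -- main case
    obtain ⟨a, ha, hea⟩ := jstar_mem h0
    have haltn : jstar e < n := ha ▸ a.isLt
    have hbn : jstar e + 1 < n := by omega
    set b : Fin n := ⟨jstar e + 1, hbn⟩ with hbdef
    have heb : e b = 0 := eq_zero_of_gt_jstar (by simp [hbdef])
    have hab : a < b := by
      rw [Fin.lt_iff_val_lt_val]; simp [hbdef, ha]
    simp only [Finset.mem_insert, Finset.mem_singleton] at hc
    rcases hc with hc | hc
    · -- c = e + deltaN (jstar e + 1)
      subst hc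
      refine Finset.prod_le_prod' fun j _ => ?_
      by_cases hj : (j : ℕ) = jstar e + 1
      · have hjb : j = b := Fin.ext (by simp [hbdef, hj])
        subst hjb
        simp only [Pi.add_apply, deltaN, heb, if_pos hj]
        norm_num
        exact H1 b
      · simp only [Pi.add_apply, deltaN, if_neg hj, add_zero]; exact le_rfl
    · -- c = e + deltaN (jstar e) + deltaN (jstar e + 1)
      subst hc
      have hQe : Q q e = q a (e a) * (q b (e b) *
          ∏ x ∈ (Finset.univ.erase a).erase b, q x (e x)) := by
        rw [Q, ← Finset.mul_prod_erase Finset.univ _ (Finset.mem_univ a),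
          ← Finset.mul_prod_erase _ _ (Finset.mem_erase.mpr ⟨(Fin.ne_of_gt hab), Finset.mem_univ b⟩)]
      set c := e + deltaN (jstar e) + deltaN (jstar e + 1) with hcdef
      have hca : c a = 0 := by
        simp only [hcdef, Pi.add_apply, deltaN, if_pos ha, hea]
        rw [if_neg (by omega)]
        decide
      have hcb : c b = 1 := by
        simp only [hcdef, Pi.add_apply, deltaN, heb]
        rw [if_neg (show ¬ ((b : ℕ) = jstar e) by simp [hbdef]), if_pos (show (b : ℕ) = jstar e + 1 by simp [hbdef])]
        decide
      have hcx : ∀ x : Fin n, x ≠ a → x ≠ b → c x = e x := by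
        intro x hxa hxb
        have h1 : (x : ℕ) ≠ jstar e := fun h => hxa (Fin.ext (by rw [h, ha]))
        have h2 : (x : ℕ) ≠ jstar e + 1 := fun h => hxb (Fin.ext (by simp [hbdef, h]))
        simp [hcdef, deltaN, h1, h2]
      have hQc : Q q c = q a (c a) * (q b (c b) *
          ∏ x ∈ (Finset.univ.erase a).erase b, q x (e x)) := by
        rw [Q, ← Finset.mul_prod_erase Finset.univ _ (Finset.mem_univ a),
          ← Finset.mul_prod_erase _ _ (Finset.mem_erase.mpr ⟨(Fin.ne_of_gt hab), Finset.mem_univ b⟩)]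
        congr 2
        refine Finset.prod_congr rfl fun x hx => ?_
        simp only [Finset.mem_erase] at hx
        rw [hcx x hx.2.1 hx.1]
      rw [hQe, hQc, hca, hcb, hea, heb, ← mul_assoc, ← mul_assoc]
      exact mul_le_mul_left (H2 a b hab) _

theorem sgrand_nonincreasing {n : ℕ} (hn : 1 ≤ n) (q : Fin n → ZMod 2 → NNReal)
    (H1 : ∀ j, q j 1 ≤ q j 0)
    (H2 : ∀ j l : Fin n, j < l → q j 0 * q l 1 ≤ q j 1 * q l 0)
    (S : ℕ → Finset (Fin n → ZMod 2)) (E : ℕ → Fin n → ZMod 2)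
    (hrun : SGRANDRun q S E) :
    ∀ g : ℕ, (S g).Nonempty → (S (g + 1)).Nonempty →
      Q q (E (g + 1)) ≤ Q q (E g) := by
  intro g hg hg1
  obtain ⟨hS0, hstep⟩ := hrun
  obtain ⟨hmem, hmax, hnext⟩ := hstep g hg
  obtain ⟨hmem1, -, -⟩ := hstep (g + 1) hg1
  rw [hnext] at hmem1
  rcases Finset.mem_union.mp hmem1 with h | h
  · exact hmax _ (Finset.mem_of_mem_erase h)
  · exact child_le q H1 H2 (E g) _ h
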